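/- Let Ω ⊂ ℝ² be an open set and u ∈ BV(Ω). If the total variation equals the variation in the second coordinate direction, i.e. ∫_Ω |Du| = ∫_Ω |D₂u|, then the variation in the first coordinate direction vanishes: ∫_Ω |D₁u| = 0. -/

import Mathlib

noncomputable section
open MeasureTheory Filter Set Topology

/-- The set of test values for the variation of `u` in direction `e` on `Ω`:
numbers `∫_Ω u ∂_e ξ` for scalar test functions `ξ ∈ C¹_c(Ω)` with `|ξ| ≤ 1`. -/
def dirVarSet (Ω : Set (ℝ × ℝ)) (u : ℝ × ℝ → ℝ) (e : ℝ × ℝ) : Set ℝ :=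
  {v | ∃ ξ : ℝ × ℝ → ℝ, ContDiff ℝ 1 ξ ∧ HasCompactSupport ξ ∧ tsupport ξ ⊆ Ω ∧
      (∀ x, |ξ x| ≤ 1) ∧ v = ∫ x in Ω, u x * fderiv ℝ ξ x e}

/-- The variation `∫_Ω |D_e u|` of `u` in direction `e`. -/
def dirVar (Ω : Set (ℝ × ℝ)) (u : ℝ × ℝ → ℝ) (e : ℝ × ℝ) : ℝ :=
  sSup (dirVarSet Ω u e)

/-- Test values for the total variation of `u` on `Ω`: numbers `∫_Ω u div ξ` for
vector fields `ξ ∈ C¹_c(Ω, ℝ²)` with (Euclidean) `|ξ| ≤ 1`. -/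
def varSet (Ω : Set (ℝ × ℝ)) (u : ℝ × ℝ → ℝ) : Set ℝ :=
  {v | ∃ ξ : ℝ × ℝ → ℝ × ℝ, ContDiff ℝ 1 ξ ∧ HasCompactSupport ξ ∧ tsupport ξ ⊆ Ω ∧
      (∀ x, (ξ x).1 ^ 2 + (ξ x).2 ^ 2 ≤ 1) ∧
      v = ∫ x in Ω, (u x * (fderiv ℝ ξ x (1, 0)).1 + u x * (fderiv ℝ ξ x (0, 1)).2)}

/-- The total variation `∫_Ω |Du|`. -/
def totalVar (Ω : Set (ℝ × ℝ)) (u : ℝ × ℝ → ℝ) : ℝ := sSup (varSet Ω u)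

/-- `u` is of bounded variation on `Ω`. -/
def IsBVOn (Ω : Set (ℝ × ℝ)) (u : ℝ × ℝ → ℝ) : Prop :=
  IntegrableOn u Ω volume ∧ BddAbove (varSet Ω u)

/-- The open unit square `Q = (0,1)²`. -/
def unitSquare : Set (ℝ × ℝ) := Ioo (0 : ℝ) 1 ×ˢ Ioo (0 : ℝ) 1

/-- if `u ∈ BV(Ω)` on a planar open set `Ω` and the total variation equals
the variation in the second coordinate direction, then the variation in the first
coordinate direction vanishes. -/
lemma aux_integrable (Ω : Set (ℝ × ℝ)) (u : ℝ × ℝ → ℝ) (ξ : ℝ × ℝ → ℝ)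
    (hc : ContDiff ℝ 1 ξ) (hs : HasCompactSupport ξ) (hu : IntegrableOn u Ω volume)
    (e : ℝ × ℝ) :
    IntegrableOn (fun x => u x * fderiv ℝ ξ x e) Ω volume := by
  have hD : Continuous fun x => fderiv ℝ ξ x e :=
    (hc.continuous_fderiv one_ne_zero).clm_apply continuous_const
  have hDs : HasCompactSupport fun x => fderiv ℝ ξ x e :=
    (hs.fderiv ℝ).comp_left (g := fun L : (ℝ × ℝ) →L[ℝ] ℝ => L e) rfl
  obtain ⟨C, hC⟩ := hD.bounded_above_of_compact_support hDs
  have := hu.bdd_mul (hD.aestronglyMeasurable.restrict) (Eventually.of_forall fun x => by simpa using hC x)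
  simpa [mul_comm, IntegrableOn] using this

lemma zero_mem_dirVarSet (Ω : Set (ℝ × ℝ)) (u : ℝ × ℝ → ℝ) (e : ℝ × ℝ) :
    (0 : ℝ) ∈ dirVarSet Ω u e := by
  refine ⟨fun _ => 0, contDiff_const, ?_, ?_, fun x => by simp, ?_⟩
  · simpa [HasCompactSupport, tsupport] using isCompact_empty
  · simp [tsupport]
  · simp

/-- key combination lemma -/
lemma key_mem (Ω : Set (ℝ × ℝ)) (u : ℝ × ℝ → ℝ) (hu : IntegrableOn u Ω volume)
    {v₁ v₂ t s : ℝ} (h₁ : v₁ ∈ dirVarSet Ω u (1, 0)) (h₂ : v₂ ∈ dirVarSet Ω u (0, 1))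
    (hts : t ^ 2 + s ^ 2 ≤ 1) : t * v₁ + s * v₂ ∈ varSet Ω u := by
  obtain ⟨ξ₁, hc₁, hs₁, hΩ₁, hb₁, rfl⟩ := h₁
  obtain ⟨ξ₂, hc₂, hs₂, hΩ₂, hb₂, rfl⟩ := h₂
  refine ⟨fun x => (t * ξ₁ x, s * ξ₂ x),
    ContDiff.prodMk (contDiff_const.mul hc₁) (contDiff_const.mul hc₂), ?_, ?_, ?_, ?_⟩
  · refine HasCompactSupport.intro (hs₁.union hs₂) (fun x hx => ?_)
    simp only [mem_union, not_or] at hx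
    simp [image_eq_zero_of_notMem_tsupport hx.1, image_eq_zero_of_notMem_tsupport hx.2,
      Prod.ext_iff]
  · refine subset_trans (closure_minimal ?_ ((isClosed_tsupport ξ₁).union
      (isClosed_tsupport ξ₂))) (union_subset hΩ₁ hΩ₂)
    intro x hx
    by_contra hxx
    simp only [mem_union, not_or] at hxx
    exact hx (by simp [Function.mem_support, image_eq_zero_of_notMem_tsupport hxx.1,
      image_eq_zero_of_notMem_tsupport hxx.2, Prod.ext_iff])
  · intro x
    have e1 : ξ₁ x ^ 2 ≤ 1 := (sq_le_one_iff_abs_le_one _).mpr (hb₁ x)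
    have e2 : ξ₂ x ^ 2 ≤ 1 := (sq_le_one_iff_abs_le_one _).mpr (hb₂ x)
    have h1 : (t * ξ₁ x) ^ 2 ≤ t ^ 2 := by
      rw [mul_pow]; nlinarith [sq_nonneg t]
    have h2 : (s * ξ₂ x) ^ 2 ≤ s ^ 2 := by
      rw [mul_pow]; nlinarith [sq_nonneg s]
    calc (t * ξ₁ x) ^ 2 + (s * ξ₂ x) ^ 2 ≤ t ^ 2 + s ^ 2 := add_le_add h1 h2
      _ ≤ 1 := hts
  · have hfd : ∀ x, fderiv ℝ (fun x => (t * ξ₁ x, s * ξ₂ x)) x =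
        ((t • fderiv ℝ ξ₁ x).prod (s • fderiv ℝ ξ₂ x)) := by
      intro x
      exact (HasFDerivAt.prodMk ((hc₁.differentiable one_ne_zero x).hasFDerivAt.const_mul t)
        ((hc₂.differentiable one_ne_zero x).hasFDerivAt.const_mul s)).fderiv
    have hint : ∀ x, u x * (fderiv ℝ (fun x => (t * ξ₁ x, s * ξ₂ x)) x (1, 0)).1 +
        u x * (fderiv ℝ (fun x => (t * ξ₁ x, s * ξ₂ x)) x (0, 1)).2 =
        t * (u x * fderiv ℝ ξ₁ x (1, 0)) + s * (u x * fderiv ℝ ξ₂ x (0, 1)) := by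
      intro x; rw [hfd]; simp; ring
    simp only [hint]
    rw [integral_add ((aux_integrable Ω u ξ₁ hc₁ hs₁ hu (1,0)).const_mul t)
        ((aux_integrable Ω u ξ₂ hc₂ hs₂ hu (0,1)).const_mul s),
      integral_const_mul, integral_const_mul]

theorem stmt1 (Ω : Set (ℝ × ℝ)) (hΩ : IsOpen Ω) (u : ℝ × ℝ → ℝ)
    (hu : IsBVOn Ω u)
    (heq : totalVar Ω u = dirVar Ω u (0, 1)) :
    dirVar Ω u (1, 0) = 0 := by
  obtain ⟨huint, hbdd⟩ := hu
  -- every dirVarSet member is in varSet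
  have hsub1 : dirVarSet Ω u (1, 0) ⊆ varSet Ω u := by
    intro v hv
    have := key_mem Ω u huint (t := 1) (s := 0) hv (zero_mem_dirVarSet Ω u (0,1)) (by norm_num)
    simpa using this
  have hsub2 : dirVarSet Ω u (0, 1) ⊆ varSet Ω u := by
    intro v hv
    have := key_mem Ω u huint (t := 0) (s := 1) (zero_mem_dirVarSet Ω u (1,0)) hv (by norm_num)
    simpa using this
  have hbdd1 : BddAbove (dirVarSet Ω u (1, 0)) := hbdd.mono hsub1
  have hbdd2 : BddAbove (dirVarSet Ω u (0, 1)) := hbdd.mono hsub2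
  have hne2 : (dirVarSet Ω u (0, 1)).Nonempty := ⟨0, zero_mem_dirVarSet Ω u _⟩
  set V₂ := dirVar Ω u (0, 1) with hV₂
  have hV₂0 : 0 ≤ V₂ := le_csSup hbdd2 (zero_mem_dirVarSet Ω u _)
  -- every v ∈ varSet is ≤ totalVar = V₂
  have hle : ∀ v ∈ varSet Ω u, v ≤ V₂ := fun v hv => heq ▸ le_csSup hbdd hv
  -- show every v₁ ∈ dirVarSet e₁ is ≤ 0
  have hkey : ∀ v₁ ∈ dirVarSet Ω u (1, 0), v₁ ≤ 0 := by
    intro v₁ hv₁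
    by_contra hpos
    push_neg at hpos
    set r := Real.sqrt (v₁ ^ 2 + V₂ ^ 2) with hr
    have hrsq : r ^ 2 = v₁ ^ 2 + V₂ ^ 2 := Real.sq_sqrt (by positivity)
    have hrpos : 0 < r := by
      rw [hr]
      exact Real.sqrt_pos.2 (by positivity)
    set t := v₁ / r with ht
    set s := V₂ / r with hs₀
    have hts : t ^ 2 + s ^ 2 ≤ 1 := by
      rw [ht, hs₀, div_pow, div_pow, ← add_div, ← hrsq,
        div_self (pow_ne_zero _ (ne_of_gt hrpos))]
    have hmem : ∀ v₂ ∈ dirVarSet Ω u (0, 1), t * v₁ + s * v₂ ≤ V₂ := fun v₂ hv₂ =>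
      hle _ (key_mem Ω u huint hv₁ hv₂ hts)
    have hsV : t * v₁ + s * V₂ ≤ V₂ := by
      rcases eq_or_lt_of_le hV₂0 with h0 | h0
      · have := hmem 0 (zero_mem_dirVarSet Ω u _)
        simpa [← h0] using this
      · have hspos : 0 < s := div_pos h0 hrpos
        have : V₂ ≤ (V₂ - t * v₁) / s := by
          refine csSup_le hne2 (fun v₂ hv₂ => ?_)
          rw [le_div_iff₀ hspos]
          nlinarith [hmem v₂ hv₂]
        rw [le_div_iff₀ hspos] at this
        nlinarith
    have hval : t * v₁ + s * V₂ = r := by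
      rw [ht, hs₀, div_mul_eq_mul_div, div_mul_eq_mul_div, ← add_div, ← sq, ← sq,
        ← hrsq, sq, mul_div_assoc, div_self (ne_of_gt hrpos), mul_one]
    rw [hval] at hsV
    have : r ^ 2 ≤ V₂ ^ 2 := by nlinarith
    rw [hrsq] at this
    nlinarith
  refine le_antisymm (csSup_le ⟨0, zero_mem_dirVarSet Ω u _⟩ hkey)
    (le_csSup hbdd1 (zero_mem_dirVarSet Ω u _))
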